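/- Let X be a topological space with at least 2 points. Then the weight of X equals the supremum over x ∈ X of the weights of the subspaces X \ {x}. -/

import Mathlib

open Cardinal TopologicalSpace

/-- The weight of a topological space: the least cardinality of a base, taken to be
at least `ℵ₀`. -/
noncomputable def wt (X : Type u) [TopologicalSpace X] : Cardinal.{u} :=
  max Cardinal.aleph0
    (sInf {c : Cardinal.{u} | ∃ B : Set (Set X), IsTopologicalBasis B ∧ Cardinal.mk B = c})

lemma wt_set_nonempty (X : Type u) [TopologicalSpace X] :
    {c : Cardinal.{u} | ∃ B : Set (Set X), IsTopologicalBasis B ∧ Cardinal.mk B = c}.Nonempty :=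
  ⟨_, {U | IsOpen U}, isTopologicalBasis_opens, rfl⟩

lemma aleph0_le_wt (X : Type u) [TopologicalSpace X] : Cardinal.aleph0 ≤ wt X :=
  le_max_left _ _

lemma wt_le_of_basis {X : Type u} [TopologicalSpace X] {B : Set (Set X)}
    (hB : IsTopologicalBasis B) : wt X ≤ max Cardinal.aleph0 (Cardinal.mk B) :=
  max_le_max le_rfl (csInf_le' ⟨B, hB, rfl⟩)

lemma exists_basis_wt (X : Type u) [TopologicalSpace X] :
    ∃ B : Set (Set X), IsTopologicalBasis B ∧ max Cardinal.aleph0 (Cardinal.mk B) = wt X := by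
  obtain ⟨B, hB, hc⟩ := csInf_mem (wt_set_nonempty X)
  exact ⟨B, hB, by rw [wt, hc]⟩

lemma wt_subtype_le {X : Type u} [TopologicalSpace X] (s : Set X) :
    wt s ≤ wt X := by
  obtain ⟨B, hB, hc⟩ := exists_basis_wt X
  have h := hB.isInducing (f := (Subtype.val : s → X)) Topology.IsInducing.subtypeVal
  calc wt s ≤ max Cardinal.aleph0 (Cardinal.mk ((Set.preimage (Subtype.val : s → X)) '' B)) :=
        wt_le_of_basis h
    _ ≤ max Cardinal.aleph0 (Cardinal.mk B) := max_le_max le_rfl Cardinal.mk_image_le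
    _ = wt X := hc

lemma wt_of_finite (X : Type u) [TopologicalSpace X] [Finite X] :
    wt X = Cardinal.aleph0 := by
  refine le_antisymm ?_ (aleph0_le_wt X)
  refine (wt_le_of_basis isTopologicalBasis_opens).trans (max_le le_rfl ?_)
  exact le_of_lt (Cardinal.lt_aleph0_of_finite _)

/-- The maximal open extension of a set in a punctured subspace. -/
def ext {X : Type u} [TopologicalSpace X] (z : X) (v : Set ({z}ᶜ : Set X)) : Set X :=
  ⋃₀ {w : Set X | IsOpen w ∧ w ∩ {z}ᶜ ⊆ Subtype.val '' v}

lemma ext_isOpen {X : Type u} [TopologicalSpace X] (z : X) (v : Set ({z}ᶜ : Set X)) :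
    IsOpen (ext z v) :=
  isOpen_sUnion fun _ hw => hw.1

lemma ext_inter_subset {X : Type u} [TopologicalSpace X] (z : X) (v : Set ({z}ᶜ : Set X)) :
    ext z v ∩ {z}ᶜ ⊆ Subtype.val '' v := by
  rintro a ⟨⟨w, hw, haw⟩, haz⟩
  exact hw.2 ⟨haw, haz⟩

lemma mem_ext {X : Type u} [TopologicalSpace X] {z : X} {v : Set ({z}ᶜ : Set X)}
    (hv : IsOpen v) {b : ({z}ᶜ : Set X)} (hb : b ∈ v) : (b : X) ∈ ext z v := by
  obtain ⟨t, ht, rfl⟩ := isOpen_induced_iff.1 hv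
  refine ⟨t, ⟨ht, ?_⟩, hb⟩
  intro a ⟨hat, haz⟩
  exact ⟨⟨a, haz⟩, hat, rfl⟩

/-- Key: a point `a ≠ z` in an open set `u` has a basis-extension neighborhood inside `u ∪ {z}`. -/
lemma ext_nhds {X : Type u} [TopologicalSpace X] {z : X} {B : Set (Set ({z}ᶜ : Set X))}
    (hB : IsTopologicalBasis B) {a : X} (haz : a ≠ z) {u : Set X} (hau : a ∈ u)
    (hu : IsOpen u) : ∃ v ∈ B, a ∈ ext z v ∧ ext z v ⊆ u ∪ {z} := by
  have ha' : a ∈ ({z}ᶜ : Set X) := haz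
  obtain ⟨v, hvB, hav, hvu⟩ := hB.exists_subset_of_mem_open
    (show (⟨a, ha'⟩ : ({z}ᶜ : Set X)) ∈ Subtype.val ⁻¹' u from hau)
    (hu.preimage continuous_subtype_val)
  refine ⟨v, hvB, mem_ext (hB.isOpen hvB) hav, ?_⟩
  intro b hb
  rcases eq_or_ne b z with rfl | hbz
  · exact Or.inr rfl
  · obtain ⟨c, hcv, rfl⟩ := ext_inter_subset z v ⟨hb, hbz⟩
    exact Or.inl (hvu hcv)

/-- The family of pairwise intersections of extensions of two punctured bases. -/
def pairF {X : Type u} [TopologicalSpace X] (p q : X)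
    (Bp : Set (Set ({p}ᶜ : Set X))) (Bq : Set (Set ({q}ᶜ : Set X))) : Set (Set X) :=
  (fun vw : Set ({p}ᶜ : Set X) × Set ({q}ᶜ : Set X) => ext p vw.1 ∩ ext q vw.2) '' (Bp ×ˢ Bq)

lemma pairF_isOpen {X : Type u} [TopologicalSpace X] {p q : X}
    {Bp : Set (Set ({p}ᶜ : Set X))} {Bq : Set (Set ({q}ᶜ : Set X))} {s : Set X}
    (hs : s ∈ pairF p q Bp Bq) : IsOpen s := by
  obtain ⟨⟨v, w⟩, _, rfl⟩ := hs
  exact (ext_isOpen p v).inter (ext_isOpen q w)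

lemma pairF_nhds {X : Type u} [TopologicalSpace X] {p q : X} (hpq : p ≠ q)
    {Bp : Set (Set ({p}ᶜ : Set X))} {Bq : Set (Set ({q}ᶜ : Set X))}
    (hBp : IsTopologicalBasis Bp) (hBq : IsTopologicalBasis Bq)
    {a : X} (hap : a ≠ p) (haq : a ≠ q) {u : Set X} (hau : a ∈ u) (hu : IsOpen u) :
    ∃ s ∈ pairF p q Bp Bq, a ∈ s ∧ s ⊆ u := by
  obtain ⟨v, hvB, hav, hvu⟩ := ext_nhds hBp hap hau hu
  obtain ⟨w, hwB, haw, hwu⟩ := ext_nhds hBq haq hau hu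
  refine ⟨ext p v ∩ ext q w, ⟨⟨v, w⟩, ⟨hvB, hwB⟩, rfl⟩, ⟨hav, haw⟩, ?_⟩
  rintro b ⟨hbv, hbw⟩
  rcases hvu hbv with h | h
  · exact h
  · rcases hwu hbw with h' | h'
    · exact h'
    · exact absurd (h.symm.trans h') hpq

lemma pairF_card {X : Type u} [TopologicalSpace X] (p q : X)
    (Bp : Set (Set ({p}ᶜ : Set X))) (Bq : Set (Set ({q}ᶜ : Set X))) :
    Cardinal.mk (pairF p q Bp Bq) ≤ Cardinal.mk Bp * Cardinal.mk Bq := by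
  refine Cardinal.mk_image_le.trans ?_
  rw [Cardinal.mk_setProd]

theorem weight_reconstructible (X : Type u) [TopologicalSpace X]
    (hcard : 2 ≤ Cardinal.mk X) :
    wt X = ⨆ x : X, wt ({x}ᶜ : Set X) := by
  have hne : Nonempty X := Cardinal.mk_ne_zero_iff.1 (by positivity)
  obtain ⟨x₀⟩ := hne
  have hsup_le : ∀ z : X, wt ({z}ᶜ : Set X) ≤ ⨆ w : X, wt ({w}ᶜ : Set X) := fun z =>
    le_ciSup (Cardinal.bddAbove_range _) z
  have haleph : Cardinal.aleph0 ≤ ⨆ w : X, wt ({w}ᶜ : Set X) :=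
    (aleph0_le_wt _).trans (hsup_le x₀)
  refine le_antisymm ?_ (ciSup_le' fun x => wt_subtype_le _)
  by_cases hfin : Finite X
  · rw [wt_of_finite]
    exact haleph
  · -- X is infinite, so we can pick three distinct points
    have : Infinite X := not_finite_iff_infinite.1 hfin
    obtain ⟨x, y, hxy⟩ := exists_pair_ne X
    have hfc : (({x, y} : Set X)ᶜ).Infinite :=
      Set.Finite.infinite_compl ((Set.finite_singleton y).insert x)
    obtain ⟨z, hz⟩ := hfc.nonempty
    have hzx : z ≠ x := fun h => hz (by rw [h]; exact Set.mem_insert x {y})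
    have hzy : z ≠ y := fun h => hz (by rw [h]; exact Set.mem_insert_of_mem x rfl)
    obtain ⟨Bx, hBx, hcx⟩ := exists_basis_wt ({x}ᶜ : Set X)
    obtain ⟨By, hBy, hcy⟩ := exists_basis_wt ({y}ᶜ : Set X)
    obtain ⟨Bz, hBz, hcz⟩ := exists_basis_wt ({z}ᶜ : Set X)
    set κ := ⨆ w : X, wt ({w}ᶜ : Set X) with hκ
    have hbx : Cardinal.mk Bx ≤ κ := (le_max_right _ _).trans (hcx.le.trans (hsup_le x))
    have hby : Cardinal.mk By ≤ κ := (le_max_right _ _).trans (hcy.le.trans (hsup_le y))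
    have hbz : Cardinal.mk Bz ≤ κ := (le_max_right _ _).trans (hcz.le.trans (hsup_le z))
    set C : Set (Set X) := pairF x y Bx By ∪ pairF x z Bx Bz ∪ pairF y z By Bz with hC
    have hbasis : IsTopologicalBasis C := by
      apply isTopologicalBasis_of_isOpen_of_nhds
      · rintro s ((hs | hs) | hs) <;> exact pairF_isOpen hs
      · intro a u hau hu
        rcases eq_or_ne a x with rfl | hax
        · obtain ⟨s, hs, h⟩ := pairF_nhds hzy.symm hBy hBz hxy (Ne.symm hzx) hau hu
          exact ⟨s, Or.inr hs, h⟩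
        · rcases eq_or_ne a y with rfl | hay
          · obtain ⟨s, hs, h⟩ := pairF_nhds (Ne.symm hzx) hBx hBz (Ne.symm hxy) (Ne.symm hzy)
              hau hu
            exact ⟨s, Or.inl (Or.inr hs), h⟩
          · obtain ⟨s, hs, h⟩ := pairF_nhds hxy hBx hBy hax hay hau hu
            exact ⟨s, Or.inl (Or.inl hs), h⟩
    have hmul : κ * κ = κ := Cardinal.mul_eq_self haleph
    have hadd : κ + κ = κ := Cardinal.add_eq_self haleph
    have hCκ : Cardinal.mk C ≤ κ := by
      calc Cardinal.mk C
          ≤ Cardinal.mk (pairF x y Bx By ∪ pairF x z Bx Bz : Set (Set X))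
            + Cardinal.mk (pairF y z By Bz) := Cardinal.mk_union_le _ _
        _ ≤ (Cardinal.mk (pairF x y Bx By) + Cardinal.mk (pairF x z Bx Bz))
            + Cardinal.mk (pairF y z By Bz) :=
            add_le_add_left (Cardinal.mk_union_le _ _) _
        _ ≤ (κ * κ + κ * κ) + κ * κ := by
            gcongr
            exacts [(pairF_card _ _ _ _).trans (mul_le_mul' hbx hby),
              (pairF_card _ _ _ _).trans (mul_le_mul' hbx hbz),
              (pairF_card _ _ _ _).trans (mul_le_mul' hby hbz)]
        _ = κ := by rw [hmul, hadd, hadd]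
    calc wt X ≤ max Cardinal.aleph0 (Cardinal.mk C) := wt_le_of_basis hbasis
      _ ≤ κ := max_le haleph hCκ
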